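/- Let n ≥ 2, let S be an n×n irreducible column stochastic matrix such that RSR⁻¹ is symmetric for some invertible diagonal matrix R, and let A = diag(a₁, …, aₙ) with all aⱼ > 0 and the aⱼ not all equal (A non-scalar). For d ∈ [0, 1] write S(d) = (1−d)I + dS. Then for every d̃ ∈ (0, 1], the spectral radius satisfies ρ(S(d̃)A⁻¹S(d̃)A) > 1. (Ecologically: if the resident population is sedentary, so that the two seasonal fitness matrices are A and A⁻¹, then every dispersing mutant phenotype d̃ > 0 can invade.) -/

import Mathlib

open Matrix

/-- The spectral radius of a real square matrix: the maximum modulus of its complex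
eigenvalues. -/
noncomputable def specRad {n : ℕ} (M : Matrix (Fin n) (Fin n) ℝ) : ℝ :=
  sSup ((fun μ => ‖μ‖) '' spectrum ℂ (M.map (fun x => (x : ℂ))))

/-- A real square matrix is column stochastic if its entries are nonnegative and each
column sums to one. -/
def ColStochastic {n : ℕ} (S : Matrix (Fin n) (Fin n) ℝ) : Prop :=
  (∀ i j, 0 ≤ S i j) ∧ ∀ j, ∑ i, S i j = 1

/-- A square matrix is irreducible if for every pair of indices `(j,k)` some positive
power has positive `(j,k)` entry. -/
def MatIrreducible {n : ℕ} (S : Matrix (Fin n) (Fin n) ℝ) : Prop :=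
  ∀ j k : Fin n, ∃ p : ℕ, 0 < p ∧ 0 < (S ^ p) j k

private lemma pow_nonneg_and_le {n : ℕ} {A B : Matrix (Fin n) (Fin n) ℝ}
    (hB : ∀ i j, 0 ≤ B i j) (hBA : ∀ i j, B i j ≤ A i j) (p : ℕ) :
    (∀ i j, 0 ≤ (B ^ p) i j) ∧ (∀ i j, (B ^ p) i j ≤ (A ^ p) i j) := by
  induction p with
  | zero =>
    constructor
    · intro i j
      simp only [pow_zero, Matrix.one_apply]
      split <;> norm_num
    · intro i j; rw [pow_zero, pow_zero]
  | succ p ih =>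
    constructor
    · intro i j
      rw [pow_succ, Matrix.mul_apply]
      exact Finset.sum_nonneg fun k _ => mul_nonneg (ih.1 i k) (hB k j)
    · intro i j
      rw [pow_succ, pow_succ, Matrix.mul_apply, Matrix.mul_apply]
      exact Finset.sum_le_sum fun k _ =>
        mul_le_mul (ih.2 i k) (hBA k j) (hB k j) ((ih.1 i k).trans (ih.2 i k))

private lemma mem_spectrum_complex {n : ℕ} {G : Matrix (Fin n) (Fin n) ℝ} {lam : ℝ}
    (h : lam ∈ spectrum ℝ G) :
    (lam : ℂ) ∈ spectrum ℂ (G.map (fun x => (x : ℂ))) := by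
  rw [spectrum.mem_iff] at h ⊢
  rw [Matrix.isUnit_iff_isUnit_det, isUnit_iff_ne_zero, not_ne_iff] at h ⊢
  have hmap : (algebraMap ℝ (Matrix (Fin n) (Fin n) ℝ) lam - G).map
        (Complex.ofRealHom : ℝ →+* ℂ)
      = algebraMap ℂ (Matrix (Fin n) (Fin n) ℂ) (lam : ℂ) - G.map (fun x => (x : ℂ)) := by
    rw [Matrix.map_sub _ (fun x y => by simp)]
    congr 1
    rw [Matrix.algebraMap_eq_diagonal, Matrix.algebraMap_eq_diagonal,
      Matrix.diagonal_map (map_zero _)]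
    congr 1
  have hdet := RingHom.map_det (Complex.ofRealHom) (algebraMap ℝ _ lam - G)
  rw [RingHom.mapMatrix_apply, hmap] at hdet
  rw [← hdet, h, map_zero]

private lemma abs_le_specRad {n : ℕ} {G : Matrix (Fin n) (Fin n) ℝ} {lam : ℝ}
    (h : lam ∈ spectrum ℝ G) : |lam| ≤ specRad G := by
  have hm := mem_spectrum_complex h
  have hfin : ((fun μ => ‖μ‖) '' spectrum ℂ (G.map (fun x => (x : ℂ)))).Finite :=
    (Matrix.finite_spectrum _).image _
  have habs : |lam| = ‖(lam : ℂ)‖ := by rw [Complex.norm_real, Real.norm_eq_abs]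
  rw [specRad, habs]
  exact le_csSup hfin.bddAbove ⟨_, hm, rfl⟩

private lemma specRad_conj {n : ℕ} (M E E' : Matrix (Fin n) (Fin n) ℝ)
    (h1 : E * E' = 1) (h2 : E' * E = 1) : specRad (E * M * E') = specRad M := by
  have fm : ∀ P Q : Matrix (Fin n) (Fin n) ℝ,
      (P * Q).map (fun x => (x : ℂ)) = P.map (fun x => (x : ℂ)) * Q.map (fun x => (x : ℂ)) :=
    fun P Q => Matrix.map_mul (f := Complex.ofRealHom)
  have hone : (1 : Matrix (Fin n) (Fin n) ℝ).map (fun x => (x : ℂ)) = 1 :=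
    Matrix.map_one _ (map_zero Complex.ofRealHom) (map_one Complex.ofRealHom)
  set u : (Matrix (Fin n) (Fin n) ℂ)ˣ :=
    ⟨E.map (fun x => (x : ℂ)), E'.map (fun x => (x : ℂ)),
      by rw [← fm, h1, hone], by rw [← fm, h2, hone]⟩ with hu
  have hspec : spectrum ℂ ((E * M * E').map (fun x => (x : ℂ)))
      = spectrum ℂ (M.map (fun x => (x : ℂ))) := by
    calc spectrum ℂ ((E * M * E').map (fun x => (x : ℂ)))
        = spectrum ℂ ((u : Matrix (Fin n) (Fin n) ℂ) * M.map (fun x => (x : ℂ)) * ↑u⁻¹) := by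
          rw [fm, fm]; rfl
      _ = spectrum ℂ (M.map (fun x => (x : ℂ))) := spectrum.units_conjugate
  unfold specRad
  rw [hspec]


set_option maxHeartbeats 1000000 in
/-- If the seasonal fitness matrices of a sedentary resident are `A` and `A⁻¹` with `A`
diagonal, positive and non-scalar, and `S` is irreducible column stochastic and diagonally
similar to a symmetric matrix, then every mutant with dispersal rate `d̃ ∈ (0,1]` invades:
`ρ(S(d̃)A⁻¹S(d̃)A) > 1`. -/
theorem sedentary_invadable {n : ℕ} (hn : 2 ≤ n)
    (S : Matrix (Fin n) (Fin n) ℝ) (hS : ColStochastic S) (hirr : MatIrreducible S)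
    (r : Fin n → ℝ) (hr : ∀ i, r i ≠ 0)
    (hsym : (Matrix.diagonal r * S * (Matrix.diagonal r)⁻¹).IsSymm)
    (a : Fin n → ℝ) (ha : ∀ j, 0 < a j) (hns : ∃ j k, a j ≠ a k) :
    ∀ dt : ℝ, 0 < dt → dt ≤ 1 →
      1 < specRad (((1 - dt) • 1 + dt • S) * (Matrix.diagonal a)⁻¹ *
        (((1 - dt) • 1 + dt • S) * Matrix.diagonal a)) := by
  intro dt hdt0 hdt1
  by_contra hc
  push_neg at hc
  set Sd : Matrix (Fin n) (Fin n) ℝ := (1 - dt) • 1 + dt • S with hSddef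
  have hSdapp : ∀ i j, Sd i j = (1 - dt) * (if i = j then 1 else 0) + dt * S i j := by
    intro i j
    simp [hSddef, Matrix.one_apply, Matrix.add_apply, Matrix.smul_apply, smul_eq_mul]
  have hSdnn : ∀ i j, 0 ≤ Sd i j := by
    intro i j
    rw [hSdapp]
    have h1 : (0:ℝ) ≤ 1 - dt := by linarith
    have h2 : (0:ℝ) ≤ dt * S i j := mul_nonneg hdt0.le (hS.1 i j)
    split <;> nlinarith
  have hSdcol : ∀ j, ∑ i, Sd i j = 1 := by
    intro j
    have h : ∑ i, Sd i j = ∑ i, ((1 - dt) * (if i = j then 1 else 0) + dt * S i j) :=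
      Finset.sum_congr rfl fun i _ => hSdapp i j
    rw [h, Finset.sum_add_distrib, ← Finset.mul_sum, ← Finset.mul_sum, hS.2 j]
    rw [Finset.sum_ite_eq' Finset.univ j (fun _ => (1:ℝ))]
    simp
  have hSdirr : ∀ j k, ∃ p, 0 < p ∧ 0 < (Sd ^ p) j k := by
    intro j k
    obtain ⟨p, hp0, hpS⟩ := hirr j k
    refine ⟨p, hp0, ?_⟩
    have hB : ∀ i j, 0 ≤ (dt • S) i j := fun i j => by
      simp only [Matrix.smul_apply, smul_eq_mul]
      exact mul_nonneg hdt0.le (hS.1 i j)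
    have hBA : ∀ i j, (dt • S) i j ≤ Sd i j := by
      intro i j
      rw [hSdapp]
      simp only [Matrix.smul_apply, smul_eq_mul]
      have h1 : (0:ℝ) ≤ 1 - dt := by linarith
      split <;> nlinarith
    have hle := (pow_nonneg_and_le hB hBA p).2 j k
    have hsm : ((dt • S) ^ p) j k = dt ^ p * (S ^ p) j k := by
      rw [smul_pow]; simp [smul_eq_mul]
    have hpos : 0 < dt ^ p * (S ^ p) j k := mul_pos (pow_pos hdt0 p) hpS
    rw [hsm] at hle
    linarith
  set q : Fin n → ℝ := fun i => |r i| with hqdef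
  have hq : ∀ i, 0 < q i := fun i => abs_pos.mpr (hr i)
  have hqr : ∀ i, q i * q i = r i * r i := fun i => abs_mul_abs_self (r i)
  have hinvdiag : (Matrix.diagonal r)⁻¹ = Matrix.diagonal (fun i => (r i)⁻¹) := by
    apply Matrix.inv_eq_right_inv
    rw [Matrix.diagonal_mul_diagonal]
    rw [show (fun i => r i * (r i)⁻¹) = fun _ => (1:ℝ) from funext fun i => mul_inv_cancel₀ (hr i)]
    exact Matrix.diagonal_one
  have hsymS : ∀ i j, S i j * (r i * r i) = S j i * (r j * r j) := by
    intro i j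
    have h0 := hsym.apply i j
    rw [hinvdiag, Matrix.mul_diagonal, Matrix.mul_diagonal, Matrix.diagonal_mul,
      Matrix.diagonal_mul] at h0
    have hri := hr i
    have hrj := hr j
    field_simp at h0
    linear_combination -h0
  have hsymq : ∀ i j, Sd i j * (q i * q i) = Sd j i * (q j * q j) := by
    intro i j
    by_cases hij : i = j
    · subst hij; ring
    · rw [hSdapp, hSdapp, if_neg hij, if_neg (Ne.symm hij), hqr, hqr]
      linear_combination dt * (hsymS i j)
  set s : Fin n → ℝ := fun j => Real.sqrt (a j) with hsdef
  have hs : ∀ j, 0 < s j := fun j => Real.sqrt_pos.mpr (ha j)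
  have hss : ∀ j, s j * s j = a j := fun j => Real.mul_self_sqrt (ha j).le
  set X : Matrix (Fin n) (Fin n) ℝ :=
    Matrix.of (fun i j => (s i)⁻¹ * q i * Sd i j * ((q j)⁻¹ * s j)) with hXdef
  have hXapp : ∀ i j, X i j = (s i)⁻¹ * q i * Sd i j * ((q j)⁻¹ * s j) := fun i j => rfl
  set w : Fin n → ℝ := fun i => (s i)⁻¹ * (q i)⁻¹ with hwdef
  set G : Matrix (Fin n) (Fin n) ℝ := Xᵀ * X with hGdef
  have key : ∀ i j, Sd i j * ((q j)⁻¹ * (q j)⁻¹) = Sd j i * ((q i)⁻¹ * (q i)⁻¹) := by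
    intro i j
    have h := hsymq i j
    have hKi := (hq i).ne'
    have hKj := (hq j).ne'
    field_simp
    linear_combination h
  have hXw : X *ᵥ w = w := by
    funext i
    show ∑ j, X i j * w j = w i
    have hterm : ∀ j, X i j * w j = ((s i)⁻¹ * (q i)⁻¹) * Sd j i := by
      intro j
      rw [hXapp]
      have hKi := (hq i).ne'
      have hKj := (hq j).ne'
      have hsj := (hs j).ne'
      have hsi := (hs i).ne'
      calc (s i)⁻¹ * q i * Sd i j * ((q j)⁻¹ * s j) * ((s j)⁻¹ * (q j)⁻¹)
          = (s i)⁻¹ * q i * (Sd i j * ((q j)⁻¹ * (q j)⁻¹)) * (s j * (s j)⁻¹) := by ring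
        _ = (s i)⁻¹ * q i * (Sd j i * ((q i)⁻¹ * (q i)⁻¹)) * 1 := by
            rw [key i j, mul_inv_cancel₀ hsj]
        _ = (s i)⁻¹ * (q i)⁻¹ * Sd j i := by
            field_simp
    rw [Finset.sum_congr rfl fun j _ => hterm j, ← Finset.mul_sum, hSdcol i, mul_one]
  have hGw : G *ᵥ w = Xᵀ *ᵥ w := by
    rw [hGdef, ← Matrix.mulVec_mulVec, hXw]
  have hwGw : w ⬝ᵥ (G *ᵥ w) = w ⬝ᵥ w := by
    rw [hGw, dotProduct_mulVec, vecMul_transpose, hXw]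
  set e : Fin n → ℝ := fun i => s i * q i with hedef
  have he : ∀ i, e i ≠ 0 := fun i => (mul_pos (hs i) (hq i)).ne'
  set E : Matrix (Fin n) (Fin n) ℝ := Matrix.diagonal e with hEdef
  set E' : Matrix (Fin n) (Fin n) ℝ := Matrix.diagonal (fun i => (e i)⁻¹) with hE'def
  have hEE' : E * E' = 1 := by
    rw [hEdef, hE'def, Matrix.diagonal_mul_diagonal]
    rw [show (fun i => e i * (e i)⁻¹) = fun _ => (1:ℝ) from funext fun i => mul_inv_cancel₀ (he i)]
    exact Matrix.diagonal_one
  have hE'E : E' * E = 1 := by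
    rw [hEdef, hE'def, Matrix.diagonal_mul_diagonal]
    rw [show (fun i => (e i)⁻¹ * e i) = fun _ => (1:ℝ) from funext fun i => inv_mul_cancel₀ (he i)]
    exact Matrix.diagonal_one
  set A : Matrix (Fin n) (Fin n) ℝ := Matrix.diagonal a with hAdef
  set Ai : Matrix (Fin n) (Fin n) ℝ := Matrix.diagonal (fun i => (a i)⁻¹) with hAidef
  have hAinv : A⁻¹ = Ai := by
    apply Matrix.inv_eq_right_inv
    rw [hAdef, hAidef, Matrix.diagonal_mul_diagonal]
    rw [show (fun i => a i * (a i)⁻¹) = fun _ => (1:ℝ) from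
      funext fun i => mul_inv_cancel₀ (ha i).ne']
    exact Matrix.diagonal_one
  set M : Matrix (Fin n) (Fin n) ℝ := Sd * Ai * (Sd * A) with hMdef
  have hEME' : ∀ (N : Matrix (Fin n) (Fin n) ℝ) i j, (E * N * E') i j = e i * N i j * (e j)⁻¹ := by
    intro N i j
    rw [hEdef, hE'def, Matrix.mul_diagonal, Matrix.diagonal_mul]
  have hMapp : ∀ i j, M i j = ∑ k, Sd i k * (a k)⁻¹ * (Sd k j * a j) := by
    intro i j
    rw [hMdef, Matrix.mul_apply]
    exact Finset.sum_congr rfl fun k _ => by rw [Matrix.mul_diagonal, Matrix.mul_diagonal]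
  have hGM : G = E * M * E' := by
    ext i j
    have hL : G i j = ∑ k, X k i * X k j := by
      rw [hGdef, Matrix.mul_apply]
      exact Finset.sum_congr rfl fun k _ => rfl
    rw [hL, hEME', hMapp, Finset.mul_sum, Finset.sum_mul]
    refine Finset.sum_congr rfl fun k _ => ?_
    rw [hXapp, hXapp]
    have hKi := (hq i).ne'
    have hKk := (hq k).ne'
    have hKj := (hq j).ne'
    have hsk := (hs k).ne'
    have hsj := (hs j).ne'
    have hsi := (hs i).ne'
    calc (s k)⁻¹ * q k * Sd k i * ((q i)⁻¹ * s i) * ((s k)⁻¹ * q k * Sd k j * ((q j)⁻¹ * s j))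
        = (Sd k i * ((q i)⁻¹ * (q i)⁻¹)) * (q i * ((s k)⁻¹ * q k * s i *
            ((s k)⁻¹ * q k * Sd k j * ((q j)⁻¹ * s j)))) := by field_simp
      _ = (Sd i k * ((q k)⁻¹ * (q k)⁻¹)) * (q i * ((s k)⁻¹ * q k * s i *
            ((s k)⁻¹ * q k * Sd k j * ((q j)⁻¹ * s j)))) := by rw [← key i k]
      _ = e i * (Sd i k * (a k)⁻¹ * (Sd k j * a j)) * (e j)⁻¹ := by
          rw [hedef, ← hss k, ← hss j]
          field_simp
  have hspecGM : specRad G = specRad M := by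
    rw [hGM]; exact specRad_conj M E E' hEE' hE'E
  have hcM : specRad M ≤ 1 := by rwa [hAinv] at hc
  have hcG : specRad G ≤ 1 := by rw [hspecGM]; exact hcM
  -- Hermitian / PSD part
  have hGherm : G.IsHermitian := by
    rw [hGdef]
    simpa [Matrix.conjTranspose_eq_transpose_of_trivial] using Matrix.isHermitian_conjTranspose_mul_self X
  have hH : (1 - G).IsHermitian := Matrix.isHermitian_one.sub hGherm
  have hshift : ∀ μ : ℝ, μ ∈ spectrum ℝ (1 - G) → 1 - μ ∈ spectrum ℝ G := by
    intro μ hμ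
    rw [spectrum.mem_iff] at hμ ⊢
    intro hcon
    apply hμ
    have heq : algebraMap ℝ (Matrix (Fin n) (Fin n) ℝ) μ - (1 - G)
        = -(algebraMap ℝ (Matrix (Fin n) (Fin n) ℝ) (1 - μ) - G) := by
      rw [_root_.map_sub, _root_.map_one]; abel
    rw [heq]
    exact hcon.neg
  have heig : ∀ i, 0 ≤ hH.eigenvalues i := by
    intro i
    have hmem := hH.eigenvalues_mem_spectrum_real i
    have hmem2 := hshift _ hmem
    have habs := abs_le_specRad hmem2
    have h1 : |1 - hH.eigenvalues i| ≤ 1 := habs.trans hcG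
    have := (abs_le.mp h1).2
    linarith
  have hPSD : (1 - G).PosSemidef := (Matrix.IsHermitian.posSemidef_iff_eigenvalues_nonneg hH).mpr (fun i => heig i)
  have hzero : star w ⬝ᵥ ((1 - G) *ᵥ w) = 0 := by
    rw [star_trivial, Matrix.sub_mulVec, Matrix.one_mulVec, dotProduct_sub, hwGw, sub_self]
  have hkill : (1 - G) *ᵥ w = 0 := (hPSD.dotProduct_mulVec_zero_iff w).mp hzero
  have hGww : G *ᵥ w = w := by
    rw [Matrix.sub_mulVec, Matrix.one_mulVec, sub_eq_zero] at hkill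
    exact hkill.symm
  have hXtw : Xᵀ *ᵥ w = w := hGw.symm.trans hGww
  -- extract the fixed-vector identity
  have hfix : ∀ i, ∑ k, Sd k i * (a k)⁻¹ = (a i)⁻¹ := by
    intro i
    have h0 := congrFun hXtw i
    have h1 : (Xᵀ *ᵥ w) i = ∑ k, X k i * w k := by
      simp [Matrix.mulVec, dotProduct, Matrix.transpose_apply]
    have hterm : ∀ k, X k i * w k = (s i * (q i)⁻¹) * (Sd k i * (a k)⁻¹) := by
      intro k
      rw [hXapp, hwdef, ← hss k]
      have hKi := (hq i).ne'
      have hKk := (hq k).ne'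
      have hsk := (hs k).ne'
      have hsi := (hs i).ne'
      field_simp
    rw [h1, Finset.sum_congr rfl fun k _ => hterm k, ← Finset.mul_sum] at h0
    have hw : w i = (s i)⁻¹ * (q i)⁻¹ := rfl
    rw [hw] at h0
    have hKi := (hq i).ne'
    have hsi := (hs i).ne'
    have hcoef : s i * (q i)⁻¹ ≠ 0 := mul_ne_zero hsi (inv_ne_zero hKi)
    have hT : ∑ k, Sd k i * (a k)⁻¹ = ((s i)⁻¹ * (q i)⁻¹) / (s i * (q i)⁻¹) := by
      rw [eq_div_iff hcoef]
      linear_combination h0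
    rw [hT, ← hss i]
    field_simp
  -- final combinatorial contradiction
  have hnpos : 0 < n := by omega
  obtain ⟨k0, -, hk0⟩ := Finset.exists_min_image Finset.univ (fun k => (a k)⁻¹)
    ⟨⟨0, hnpos⟩, Finset.mem_univ _⟩
  set z : Fin n → ℝ := fun k => (a k)⁻¹ - (a k0)⁻¹ with hzdef
  have hznn : ∀ k, 0 ≤ z k := fun k => sub_nonneg.mpr (hk0 k (Finset.mem_univ k))
  have hz1 : ∀ m, ∑ k, Sd k m * z k = z m := by
    intro m
    have : ∀ k, Sd k m * z k = Sd k m * (a k)⁻¹ - Sd k m * (a k0)⁻¹ := by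
      intro k; rw [hzdef]; ring
    rw [Finset.sum_congr rfl fun k _ => this k, Finset.sum_sub_distrib, hfix m,
      ← Finset.sum_mul, hSdcol m, one_mul]
  have hzfix : ∀ p, ∀ m, ∑ k, (Sd ^ p) k m * z k = z m := by
    intro p
    induction p with
    | zero =>
      intro m
      rw [pow_zero]
      have hone : ∀ k, (1 : Matrix (Fin n) (Fin n) ℝ) k m * z k
          = if k = m then z k else 0 := by
        intro k
        rw [Matrix.one_apply]
        split <;> simp
      rw [Finset.sum_congr rfl fun k _ => hone k, Finset.sum_ite_eq' Finset.univ m z]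
      simp
    | succ p ih =>
      intro m
      have hexp : ∀ k, (Sd ^ (p+1)) k m = ∑ l, (Sd ^ p) k l * Sd l m := by
        intro k; rw [pow_succ, Matrix.mul_apply]
      calc ∑ k, (Sd ^ (p+1)) k m * z k
          = ∑ k, ∑ l, (Sd ^ p) k l * Sd l m * z k := by
            refine Finset.sum_congr rfl fun k _ => ?_
            rw [hexp, Finset.sum_mul]
        _ = ∑ l, Sd l m * ∑ k, (Sd ^ p) k l * z k := by
            rw [Finset.sum_comm]
            exact Finset.sum_congr rfl fun l _ => by rw [Finset.mul_sum]; exact Finset.sum_congr rfl fun k _ => by ring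
        _ = ∑ l, Sd l m * z l := Finset.sum_congr rfl fun l _ => by rw [ih l]
        _ = z m := hz1 m
  have hzne : ∃ k1, 0 < z k1 := by
    obtain ⟨j, k, hjk⟩ := hns
    have hbjk : (a j)⁻¹ ≠ (a k)⁻¹ := fun h => hjk (by
      have := congrArg (·⁻¹) h
      simpa [inv_inv] using this)
    by_cases hj : z j = 0
    · refine ⟨k, ?_⟩
      have : z k ≠ 0 := by
        intro hk
        apply hbjk
        have h1 : (a j)⁻¹ = (a k0)⁻¹ := by have := hj; rw [hzdef] at this; linarith [this]
        have h2 : (a k)⁻¹ = (a k0)⁻¹ := by have := hk; rw [hzdef] at this; linarith [this]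
        rw [h1, h2]
      exact lt_of_le_of_ne (hznn k) (Ne.symm this)
    · exact ⟨j, lt_of_le_of_ne (hznn j) (Ne.symm hj)⟩
  obtain ⟨k1, hk1⟩ := hzne
  obtain ⟨p, hp0, hpp⟩ := hSdirr k1 k0
  have hpnn : ∀ i j, 0 ≤ (Sd ^ p) i j := (pow_nonneg_and_le hSdnn (fun i j => le_rfl) p).1
  have hsum : (Sd ^ p) k1 k0 * z k1 ≤ ∑ k, (Sd ^ p) k k0 * z k :=
    Finset.single_le_sum (f := fun k => (Sd ^ p) k k0 * z k)
      (fun k _ => mul_nonneg (hpnn k k0) (hznn k)) (Finset.mem_univ k1)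
  rw [hzfix p k0] at hsum
  have hzk0 : z k0 = 0 := by rw [hzdef]; simp
  have : 0 < (Sd ^ p) k1 k0 * z k1 := mul_pos hpp hk1
  rw [hzk0] at hsum
  linarith
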